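/- A topological space X is separable and metrizable if and only if X is regular, has a countable Pytkeev network, and has countable fan open-tightness. -/

import Mathlib

open Set Filter Topology TopologicalSpace

/-- A set `A` accumulates at `x` if every neighborhood of `x` contains
infinitely many points of `A`. -/
def AccumulatesAt {X : Type*} [TopologicalSpace X] (A : Set X) (x : X) : Prop :=
  ∀ U ∈ 𝓝 x, (U ∩ A).Infinite

/-- `𝒩` is a network: for each point and open neighborhood there is a member of `𝒩`
containing the point and contained in the neighborhood. -/
def IsNetwork {X : Type*} [TopologicalSpace X] (𝒩 : Set (Set X)) : Prop :=
  ∀ (x : X) (U : Set X), IsOpen U → x ∈ U → ∃ N ∈ 𝒩, x ∈ N ∧ N ⊆ U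

/-- `𝒩` is a Pytkeev network. -/
def IsPytkeevNetwork {X : Type*} [TopologicalSpace X] (𝒩 : Set (Set X)) : Prop :=
  IsNetwork 𝒩 ∧ ∀ (x : X) (U : Set X), IsOpen U → x ∈ U →
    ∀ A : Set X, AccumulatesAt A x → ∃ N ∈ 𝒩, N ⊆ U ∧ (N ∩ A).Infinite

/-- `𝒩` is a k-network. -/
def IsKNetwork {X : Type*} [TopologicalSpace X] (𝒩 : Set (Set X)) : Prop :=
  ∀ (U K : Set X), IsOpen U → IsCompact K → K ⊆ U →
    ∃ F ⊆ 𝒩, F.Finite ∧ K ⊆ ⋃₀ F ∧ ⋃₀ F ⊆ U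

/-- `X` has countable fan open-tightness. -/
def CountableFanOpenTightness (X : Type*) [TopologicalSpace X] : Prop :=
  ∀ (x : X) (A : ℕ → Set X), (∀ n, IsOpen (A n)) → (∀ n, x ∈ closure (A n)) →
    ∃ F : ℕ → Set X, (∀ n, F n ⊆ A n) ∧ (∀ n, (F n).Finite) ∧
      ∀ U ∈ 𝓝 x, {n : ℕ | (F n ∩ U).Nonempty}.Infinite

section Aux

variable {X : Type*} [TopologicalSpace X]

/-- In a regular space, the closures of members of a Pytkeev network again form a
Pytkeev network. -/
lemma isPytkeevNetwork_closure_image [RegularSpace X] {𝒩 : Set (Set X)}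
    (h : IsPytkeevNetwork 𝒩) : IsPytkeevNetwork (closure '' 𝒩) := by
  constructor
  · intro x U hU hx
    obtain ⟨t, htx, htc, htU⟩ := exists_mem_nhds_isClosed_subset (hU.mem_nhds hx)
    obtain ⟨N, hN, hxN, hNt⟩ := h.1 x (interior t) isOpen_interior (mem_interior_iff_mem_nhds.2 htx)
    exact ⟨closure N, mem_image_of_mem _ hN, subset_closure hxN,
      (closure_mono (hNt.trans interior_subset)).trans (htc.closure_subset.trans htU)⟩
  · intro x U hU hx A hA
    obtain ⟨t, htx, htc, htU⟩ := exists_mem_nhds_isClosed_subset (hU.mem_nhds hx)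
    obtain ⟨N, hN, hNt, hNA⟩ := h.2 x (interior t) isOpen_interior
      (mem_interior_iff_mem_nhds.2 htx) A hA
    refine ⟨closure N, mem_image_of_mem _ hN,
      (closure_mono (hNt.trans interior_subset)).trans (htc.closure_subset.trans htU), ?_⟩
    exact hNA.mono (inter_subset_inter_left _ subset_closure)

/-- Key lemma: with a countable closed Pytkeev network and countable fan open-tightness,
every point of an open set lies in the interior of a finite union of network members
contained in the open set. -/
lemma key_interior [T1Space X] {𝒩 : Set (Set X)} (hc : 𝒩.Countable)
    (hcl : ∀ N ∈ 𝒩, IsClosed N) (hpy : IsPytkeevNetwork 𝒩)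
    (hfan : CountableFanOpenTightness X) (x : X) (U : Set X) (hU : IsOpen U) (hx : x ∈ U) :
    ∃ F ⊆ 𝒩, F.Finite ∧ ⋃₀ F ⊆ U ∧ x ∈ interior (⋃₀ F) := by
  obtain ⟨N₀, hN₀, hxN₀, hN₀U⟩ := hpy.1 x U hU hx
  have hne : {N | N ∈ 𝒩 ∧ N ⊆ U}.Nonempty := ⟨N₀, hN₀, hN₀U⟩
  obtain ⟨f, hf⟩ := (hc.mono (sep_subset _ _)).exists_eq_range hne
  have hfmem : ∀ k, f k ∈ 𝒩 ∧ f k ⊆ U := fun k => by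
    have : f k ∈ {N | N ∈ 𝒩 ∧ N ⊆ U} := hf ▸ mem_range_self k
    exact this
  by_contra hcon
  push_neg at hcon
  -- the finite unions B n
  set B : ℕ → Set X := fun n => ⋃ k ∈ Set.Iic n, f k with hB
  have hBclosed : ∀ n, IsClosed (B n) :=
    fun n => (Set.finite_Iic n).isClosed_biUnion fun k _ => hcl _ (hfmem k).1
  have hxB : ∀ n, x ∉ interior (B n) := by
    intro n hmem
    have h1 : f '' Set.Iic n ⊆ 𝒩 := by
      rintro _ ⟨k, _, rfl⟩; exact (hfmem k).1
    have h2 : ⋃₀ (f '' Set.Iic n) = B n := Set.sUnion_image _ _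
    have h3 : ⋃₀ (f '' Set.Iic n) ⊆ U := by
      rw [h2]; exact Set.iUnion₂_subset fun k _ => (hfmem k).2
    exact hcon _ h1 ((Set.finite_Iic n).image f) h3 (h2 ▸ hmem)
  set A : ℕ → Set X := fun n => (B n)ᶜ with hA
  have hAopen : ∀ n, IsOpen (A n) := fun n => (hBclosed n).isOpen_compl
  have hxA : ∀ n, x ∈ closure (A n) := by
    intro n
    rw [hA, closure_compl]
    exact hxB n
  obtain ⟨F, hF1, hF2, hF3⟩ := hfan x A hAopen hxA
  -- the set A' = ⋃ F n
  set A' : Set X := ⋃ n, F n with hA'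
  -- x belongs to some f m
  obtain ⟨m, hm⟩ : ∃ m, f m = N₀ := by
    have : N₀ ∈ Set.range f := hf ▸ (⟨hN₀, hN₀U⟩ : N₀ ∈ {N | N ∈ 𝒩 ∧ N ⊆ U})
    exact this.imp fun _ h => h
  have hfmB : ∀ {m' n : ℕ}, m' ≤ n → f m' ⊆ B n := fun {m' n} h =>
    Set.subset_biUnion_of_mem (u := fun k => f k) h
  by_cases hacc : AccumulatesAt A' x
  · obtain ⟨N, hN𝒩, hNU, hNinf⟩ := hpy.2 x U hU hx A' hacc
    obtain ⟨m', hm'⟩ : ∃ m', f m' = N := by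
      have : N ∈ Set.range f := hf ▸ (⟨hN𝒩, hNU⟩ : N ∈ {N | N ∈ 𝒩 ∧ N ⊆ U})
      exact this.imp fun _ h => h
    have hsub : N ∩ A' ⊆ ⋃ n ∈ Set.Iio m', F n := by
      rintro p ⟨hpN, hpA⟩
      obtain ⟨n, hn⟩ := Set.mem_iUnion.1 hpA
      rcases lt_or_ge n m' with h | h
      · exact Set.mem_biUnion h hn
      · exfalso
        have : p ∈ A n := hF1 n hn
        exact this (hfmB h (hm' ▸ hpN))
    exact hNinf (((Set.finite_Iio m').biUnion fun n _ => hF2 n).subset hsub)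
  · unfold AccumulatesAt at hacc
    push_neg at hacc
    obtain ⟨W, hW, hWfin⟩ := hacc
    set S : Set X := (W ∩ A') \ {x} with hS
    have hSfin : S.Finite := hWfin.subset Set.diff_subset
    have hW' : W ∩ Sᶜ ∈ 𝓝 x :=
      Filter.inter_mem hW (hSfin.isClosed.isOpen_compl.mem_nhds fun h => h.2 rfl)
    have hinf := hF3 _ hW'
    have hsub : {n : ℕ | (F n ∩ (W ∩ Sᶜ)).Nonempty} ⊆ Set.Iio m := by
      rintro n ⟨p, hpF, hpW, hpS⟩
      by_contra hn
      have hpx : p = x := by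
        by_contra hpx
        exact hpS ⟨⟨hpW, Set.mem_iUnion.2 ⟨n, hpF⟩⟩, hpx⟩
      have : x ∈ A n := hF1 n (hpx ▸ hpF)
      exact this (hfmB (Set.notMem_Iio.1 hn) (hm ▸ hxN₀))
    exact hinf ((Set.finite_Iio m).subset hsub)

end Aux

/-- A space is separable and metrizable iff it is regular, has a countable Pytkeev
network and has countable fan open-tightness. -/
theorem separable_metrizable_iff_pytkeev_fanOpenTightness (X : Type*) [TopologicalSpace X] :
    (SeparableSpace X ∧ MetrizableSpace X) ↔
      (T3Space X ∧ (∃ 𝒩 : Set (Set X), 𝒩.Countable ∧ IsPytkeevNetwork 𝒩) ∧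
        CountableFanOpenTightness X) := by
  constructor
  · rintro ⟨hsep, hmet⟩
    haveI := hsep
    haveI := hmet
    letI : MetricSpace X := TopologicalSpace.metrizableSpaceMetric X
    haveI : SecondCountableTopology X := UniformSpace.secondCountable_of_separable X
    refine ⟨inferInstance, ⟨countableBasis X, countable_countableBasis X, ?_, ?_⟩, ?_⟩
    · intro x U hU hx
      obtain ⟨V, hV, hxV, hVU⟩ := (isBasis_countableBasis X).exists_subset_of_mem_open hx hU
      exact ⟨V, hV, hxV, hVU⟩
    · intro x U hU hx A hA
      obtain ⟨V, hV, hxV, hVU⟩ := (isBasis_countableBasis X).exists_subset_of_mem_open hx hU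
      refine ⟨V, hV, hVU, hA V (((isBasis_countableBasis X).isOpen hV).mem_nhds hxV)⟩
    · intro x A hAopen hAcl
      obtain ⟨u, hu_basis⟩ := (𝓝 x).exists_antitone_basis
      have hsel : ∀ n, ((u n) ∩ A n).Nonempty := fun n =>
        mem_closure_iff_nhds.1 (hAcl n) _ (hu_basis.mem n)
      choose a ha using hsel
      refine ⟨fun n => {a n}, fun n => Set.singleton_subset_iff.2 (ha n).2,
        fun n => Set.finite_singleton _, ?_⟩
      intro U hU
      obtain ⟨k, hk⟩ := hu_basis.toHasBasis.mem_iff.1 hU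
      have hsub : Set.Ici k ⊆ {n : ℕ | ({a n} ∩ U).Nonempty} := by
        intro n hn
        exact ⟨a n, rfl, hk.2 (hu_basis.antitone hn (ha n).1)⟩
      exact (Set.Ici_infinite k).mono hsub
  · rintro ⟨hT3, ⟨𝒩, hc, hpy⟩, hfan⟩
    haveI := hT3
    -- pass to closures
    have hpy' := isPytkeevNetwork_closure_image hpy
    have hc' : (closure '' 𝒩).Countable := hc.image _
    have hcl' : ∀ N ∈ closure '' 𝒩, IsClosed N := by
      rintro _ ⟨N, _, rfl⟩; exact isClosed_closure
    -- build a countable base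
    haveI : SecondCountableTopology X := by
      refine ⟨⟨(fun F => interior (⋃₀ F)) '' {F | F ⊆ closure '' 𝒩 ∧ F.Finite}, ?_, ?_⟩⟩
      · refine Set.Countable.image ?_ _
        refine Set.Countable.mono ?_ (Set.countable_setOf_finite_subset hc')
        intro F hF
        exact ⟨hF.2, hF.1⟩
      · refine (isTopologicalBasis_of_isOpen_of_nhds ?_ ?_).eq_generateFrom
        · rintro _ ⟨F, _, rfl⟩; exact isOpen_interior
        · intro a u hau hu
          obtain ⟨F, hF𝒩, hFfin, hFU, haF⟩ :=
            key_interior hc' hcl' hpy' hfan a u hu hau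
          exact ⟨interior (⋃₀ F), ⟨F, ⟨hF𝒩, hFfin⟩, rfl⟩, haF, interior_subset.trans hFU⟩
    exact ⟨inferInstance, inferInstance⟩
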